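/- Fix a finite set Y, distributions {p(·|x)}_{x∈X} on Y with all entries strictly positive, and a distribution w on a finite set X (playing the role of p(x|x̂)). The distribution q on Y minimizing Σ_x w(x) D(q ‖ p(·|x)) over all probability distributions q on Y is the normalized weighted geometric mean: q(y) = (1/Z) Π_x p(y|x)^{w(x)}, where Z = Σ_y Π_x p(y|x)^{w(x)}. -/

import Mathlib

open Real Finset

/-- The normalized weighted geometric mean minimizes the average reverse KL
divergence `Σ_x w(x) D(q ‖ p(·|x))` over probability distributions `q` on `Y`. -/
theorem geometric_mean_minimizes_reverse_KL
    {X Y : Type} [Fintype X] [Fintype Y] [Nonempty Y]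
    (w : X → ℝ) (hw : ∀ x, 0 ≤ w x) (hw1 : ∑ x, w x = 1)
    (p : Y → X → ℝ) (hp : ∀ y x, 0 < p y x) (hp1 : ∀ x, ∑ y, p y x = 1)
    (Z : ℝ) (hZ : Z = ∑ y, ∏ x, p y x ^ w x)
    (qstar : Y → ℝ) (hqstar : ∀ y, qstar y = (∏ x, p y x ^ w x) / Z) :
    ∀ q : Y → ℝ, (∀ y, 0 ≤ q y) → (∑ y, q y = 1) →
      (∑ x, w x * ∑ y, qstar y * Real.log (qstar y / p y x))
        ≤ (∑ x, w x * ∑ y, q y * Real.log (q y / p y x)) := by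
  intro q hq hq1
  set g : Y → ℝ := fun y => ∏ x, p y x ^ w x with hg
  have hgpos : ∀ y, 0 < g y := fun y =>
    Finset.prod_pos fun x _ => Real.rpow_pos_of_pos (hp y x) _
  have hZpos : 0 < Z := by
    rw [hZ]; exact Finset.sum_pos (fun y _ => hgpos y) Finset.univ_nonempty
  have hqspos : ∀ y, 0 < qstar y := fun y => by
    rw [hqstar]; exact div_pos (hgpos y) hZpos
  have hqs1 : ∑ y, qstar y = 1 := by
    simp only [hqstar]
    rw [← Finset.sum_div, ← hZ, div_self hZpos.ne']
  have hlogg : ∀ y, ∑ x, w x * Real.log (p y x) = Real.log (g y) := by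
    intro y
    rw [hg]
    rw [Real.log_prod (fun x _ => (Real.rpow_pos_of_pos (hp y x) _).ne')]
    exact Finset.sum_congr rfl fun x _ => (Real.log_rpow (hp y x) _).symm
  have hlogqs : ∀ y, Real.log (qstar y) = Real.log (g y) - Real.log Z := by
    intro y; rw [hqstar y, Real.log_div (hgpos y).ne' hZpos.ne']
  -- Key identity
  have key : ∀ r : Y → ℝ, (∀ y, 0 ≤ r y) → ∑ y, r y = 1 →
      (∑ x, w x * ∑ y, r y * Real.log (r y / p y x))
        = (∑ y, r y * Real.log (r y / qstar y)) - Real.log Z := by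
    intro r hr hr1
    have swap : ∑ x, w x * ∑ y, r y * Real.log (r y / p y x)
        = ∑ y, ∑ x, w x * (r y * Real.log (r y / p y x)) := by
      rw [Finset.sum_comm]
      exact Finset.sum_congr rfl fun x _ => Finset.mul_sum _ _ _
    rw [swap]
    have term : ∀ y, ∑ x, w x * (r y * Real.log (r y / p y x))
        = r y * Real.log (r y / qstar y) - r y * Real.log Z := by
      intro y
      rcases eq_or_lt_of_le (hr y) with h | h
      · simp [← h]
      · have hne := h.ne'
        have e1 : ∀ x, Real.log (r y / p y x) = Real.log (r y) - Real.log (p y x) :=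
          fun x => Real.log_div hne (hp y x).ne'
        have e2 : Real.log (r y / qstar y) = Real.log (r y) - Real.log (qstar y) :=
          Real.log_div hne (hqspos y).ne'
        simp only [e1, e2, hlogqs y, mul_sub, Finset.sum_sub_distrib]
        rw [← Finset.sum_mul, hw1]
        have : ∑ x, w x * (r y * Real.log (p y x)) = r y * Real.log (g y) := by
          rw [← hlogg y, Finset.mul_sum]
          exact Finset.sum_congr rfl fun x _ => by ring
        rw [this]
        ring
    rw [Finset.sum_congr rfl fun y _ => term y, Finset.sum_sub_distrib,
      ← Finset.sum_mul, hr1, one_mul]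
  rw [key q hq hq1, key qstar (fun y => (hqspos y).le) hqs1]
  have hzero : ∑ y, qstar y * Real.log (qstar y / qstar y) = 0 := by
    apply Finset.sum_eq_zero
    intro y _
    rw [div_self (hqspos y).ne', Real.log_one, mul_zero]
  rw [hzero]
  have gibbs : 0 ≤ ∑ y, q y * Real.log (q y / qstar y) := by
    have hterm : ∀ y, q y - qstar y ≤ q y * Real.log (q y / qstar y) := by
      intro y
      rcases eq_or_lt_of_le (hq y) with h | h
      · simp [← h]; exact (hqspos y).le
      · have h1 := Real.log_le_sub_one_of_pos (div_pos (hqspos y) h)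
        have e1 : Real.log (qstar y / q y) = Real.log (qstar y) - Real.log (q y) :=
          Real.log_div (hqspos y).ne' h.ne'
        have e2 : Real.log (q y / qstar y) = Real.log (q y) - Real.log (qstar y) :=
          Real.log_div h.ne' (hqspos y).ne'
        rw [e1] at h1
        rw [e2]
        have hd : qstar y / q y * q y = qstar y := div_mul_cancel₀ _ h.ne'
        nlinarith [h1, h.le]
    calc (0:ℝ) = ∑ y, (q y - qstar y) := by
          rw [Finset.sum_sub_distrib, hq1, hqs1, sub_self]
      _ ≤ _ := Finset.sum_le_sum fun y _ => hterm y
  linarith
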